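/- arXiv:2411.15578 — 2 statements merged into one kernel-verified Lean document; each statement's English description precedes it below -/
import Mathlib

section
/- For every complex number λ with |λ−1| > 1, the resolvent of the continuous Cesàro operator 𝒞 on L²(ℝ) satisfies R(λ,𝒞) := (λI−𝒞)^{−1} = λ^{−2}·𝒫_{1/λ} + λ^{−1}·I, where 𝒫_α is the Hardy operator. Equivalently, for Re(α) < 1/2 with α ≠ 0, 𝒫_α = 𝒞(I − α𝒞)^{−1} = α^{−1}((I − α𝒞)^{−1} − I). -/
open MeasureTheory Complex Filter
open scoped ENNReal NNReal

noncomputable section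

/-- `L²(ℝ)` with complex values. -/
abbrev L2 : Type := MeasureTheory.Lp ℂ 2 (MeasureTheory.volume : MeasureTheory.Measure ℝ)

/-- `C` is the continuous Cesàro operator on `L²(ℝ)`:
`(C f)(x) = ∫₀¹ f(ux) du`. -/
def IsCesaroOp (C : L2 →L[ℂ] L2) : Prop :=
  ∀ f : L2, ∀ᵐ x : ℝ ∂MeasureTheory.volume, C f x = ∫ u in Set.Ioo (0:ℝ) 1, f (u * x)

/-- `T` is the Hausdorff operator with kernel `K`:
`(T f)(x) = ∫_ℝ K(u) f(ux) du`. -/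
def IsHausdorffOp (K : ℝ → ℂ) (T : L2 →L[ℂ] L2) : Prop :=
  ∀ f : L2, ∀ᵐ x : ℝ ∂MeasureTheory.volume, T f x = ∫ u : ℝ, K u * f (u * x)

/-- The kernel `u^{-α} χ_{(0,1)}(u)` of the Hardy operator `𝒫_α`. -/
def hardyKernel (α : ℂ) : ℝ → ℂ := fun u =>
  if u ∈ Set.Ioo (0:ℝ) 1 then (u : ℂ) ^ (-α) else 0

lemma measurable_cpow_const (α : ℂ) : Measurable fun u : ℝ => (u:ℂ) ^ α := by
  have h : (fun u : ℝ => (u:ℂ) ^ α) = fun u : ℝ =>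
      if (u:ℂ) = 0 then (if α = 0 then 1 else 0) else Complex.exp (Complex.log u * α) := by
    funext u; rw [Complex.cpow_def]
  rw [h]
  refine Measurable.ite ?_ measurable_const ?_
  · exact measurableSet_eq_fun (Complex.measurable_ofReal) measurable_const
  · exact (Complex.measurable_ofReal.clog.mul measurable_const).cexp

lemma ae_ae_mul_notMem {s : Set ℝ} (hs : volume s = 0) :
    ∀ᵐ x : ℝ, ∀ᵐ u : ℝ, u * x ∉ s := by
  obtain ⟨t, hst, htm, ht0⟩ := exists_measurable_superset_of_null hs
  have hmeas : MeasurableSet {p : ℝ × ℝ | p.2 * p.1 ∈ t} :=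
    (measurable_snd.mul measurable_fst) htm
  have hprod : (volume.prod volume) {p : ℝ × ℝ | p.2 * p.1 ∈ t} = 0 := by
    rw [Measure.prod_apply hmeas]
    have h0 : ∀ᵐ x : ℝ ∂volume, volume (Prod.mk x ⁻¹' {p : ℝ × ℝ | p.2 * p.1 ∈ t}) = 0 := by
      have hne : ∀ᵐ x : ℝ ∂volume, x ≠ 0 := by
        rw [ae_iff]; simpa using Real.volume_singleton
      filter_upwards [hne] with x hx
      have : Prod.mk x ⁻¹' {p : ℝ × ℝ | p.2 * p.1 ∈ t} = (· * x) ⁻¹' t := rfl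
      rw [this, Real.volume_preimage_mul_right (by simpa using hx), ht0, mul_zero]
    rw [lintegral_congr_ae h0, lintegral_zero]
  have hae : ∀ᵐ p : ℝ × ℝ ∂(volume.prod volume), p.2 * p.1 ∉ t := by
    rw [ae_iff]
    simpa using hprod
  filter_upwards [MeasureTheory.Measure.ae_ae_of_ae_prod hae] with x hx
  filter_upwards [hx] with u hu
  exact fun h => hu (hst h)

lemma memLp_comp_mul_right {F : ℝ → ℂ} (hF : MemLp F 2 volume) {c : ℝ} (hc : c ≠ 0) :
    MemLp (fun u : ℝ => F (u * c)) 2 volume := by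
  have h1 : MemLp F 2 (ENNReal.ofReal |c⁻¹| • volume) :=
    hF.smul_measure ENNReal.ofReal_ne_top
  exact h1.comp_measurePreserving ⟨measurable_mul_const c, Real.map_volume_mul_right hc⟩

lemma memLp_ker {α : ℂ} (hα : α.re < 1/2) :
    MemLp (fun u : ℝ => (u:ℂ) ^ (-α)) 2 (volume.restrict (Set.Ioo 0 1)) := by
  have hm : AEStronglyMeasurable (fun u : ℝ => (u:ℂ) ^ (-α))
      (volume.restrict (Set.Ioo 0 1)) :=
    (measurable_cpow_const (-α)).aestronglyMeasurable
  rw [memLp_two_iff_integrable_sq_norm hm]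
  have h1 : IntegrableOn (fun u : ℝ => u ^ (-(2*α.re))) (Set.Ioo 0 1) :=
    (intervalIntegral.integrableOn_Ioo_rpow_iff one_pos).2 (by linarith)
  refine h1.congr_fun ?_ measurableSet_Ioo
  intro u hu
  simp only
  rw [Complex.norm_cpow_eq_rpow_re_of_pos hu.1, Complex.neg_re,
    ← Real.rpow_natCast (u ^ (-α.re)) 2, ← Real.rpow_mul hu.1.le]
  norm_num
  ring_nf

lemma memLp_comp_mul_left {F : ℝ → ℂ} (hF : MemLp F 2 volume) {c : ℝ} (hc : c ≠ 0) :
    MemLp (fun u : ℝ => F (c * u)) 2 volume := by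
  have h := memLp_comp_mul_right hF hc
  have he : (fun u : ℝ => F (u * c)) = fun u : ℝ => F (c * u) := by
    funext u; rw [mul_comm]
  rwa [he] at h

lemma core {α : ℂ} (hα : α.re < 1/2) (hα0 : α ≠ 0) {G : ℝ → ℂ}
    (hGm : Measurable G) (hG : MemLp G 2 volume) :
    (∫ u in Set.Ioo (0:ℝ) 1, ∫ v in Set.Ioo (0:ℝ) 1, (v:ℂ)^(-α) * G (u*v)) =
      α⁻¹ * ((∫ w in Set.Ioo (0:ℝ) 1, (w:ℂ)^(-α) * G w) - ∫ w in Set.Ioo (0:ℝ) 1, G w) ∧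
    (∫ v in Set.Ioo (0:ℝ) 1, ((v:ℂ)^(-α) * ∫ u in Set.Ioo (0:ℝ) 1, G (u*v))) =
      α⁻¹ * ((∫ w in Set.Ioo (0:ℝ) 1, (w:ℂ)^(-α) * G w) - ∫ w in Set.Ioo (0:ℝ) 1, G w) := by
  have hIfin : Fact (volume (Set.Ioo (0:ℝ) 1) < ⊤) := ⟨by simp⟩
  haveI := hIfin
  set K : ℝ → ℂ := fun v : ℝ => (v:ℂ)^(-α) with hK
  have h22 : Real.HolderConjugate 2 2 := Real.HolderConjugate.two_two
  have hofReal2 : (ENNReal.ofReal (2:ℝ)) = 2 := by norm_num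
  have hkm : Measurable K := measurable_cpow_const _
  have hker : MemLp K 2 (volume.restrict (Set.Ioo (0:ℝ) 1)) := memLp_ker hα
  have hGI : MemLp G 2 (volume.restrict (Set.Ioo (0:ℝ) 1)) := hG.restrict _
  have hpqr : (1:ℝ≥0∞)/1 = 1/2 + 1/2 := by
    rw [ENNReal.div_add_div_same, one_add_one_eq_two,
      ENNReal.div_self (by norm_num) (by norm_num)]
    rw [ENNReal.div_self (by norm_num) (by norm_num)]
  have hGsq : Integrable (fun y : ℝ => ‖G y‖^(2:ℝ)) volume := by
    have h := (memLp_two_iff_integrable_sq_norm hG.aestronglyMeasurable).1 hG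
    refine h.congr (Eventually.of_forall fun y => ?_)
    show ‖G y‖ ^ (2:ℕ) = ‖G y‖ ^ (2:ℝ)
    rw [← Real.rpow_natCast (‖G y‖) 2]; norm_num
  set Nr : ℝ := ∫ y : ℝ, ‖G y‖^(2:ℝ) with hNrdef
  have hNr0 : 0 ≤ Nr := integral_nonneg fun y => Real.rpow_nonneg (norm_nonneg _) _
  -- Cauchy-Schwarz : L² bound for ∫ over sub-interval of norm of G
  have hCS1 : ∀ v : ℝ, v ∈ Set.Ioo (0:ℝ) 1 →
      (∫ w in Set.Ioo (0:ℝ) v, ‖G w‖) ≤ v ^ ((1:ℝ)/2) * Nr ^ ((1:ℝ)/2) := by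
    intro v hv
    haveI : Fact (volume (Set.Ioo (0:ℝ) v) < ⊤) := ⟨measure_Ioo_lt_top⟩
    have hone : MemLp (fun _ : ℝ => (1:ℂ)) (ENNReal.ofReal 2)
        (volume.restrict (Set.Ioo (0:ℝ) v)) := by
      rw [hofReal2]; exact memLp_const _
    have hGv : MemLp G (ENNReal.ofReal 2) (volume.restrict (Set.Ioo (0:ℝ) v)) := by
      rw [hofReal2]; exact hG.restrict _
    have h := integral_mul_norm_le_Lp_mul_Lq h22 hone hGv
    have e1 : (∫ w in Set.Ioo (0:ℝ) v, ‖(1:ℂ)‖ * ‖G w‖) = ∫ w in Set.Ioo (0:ℝ) v, ‖G w‖ := by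
      simp
    have e2 : (∫ w in Set.Ioo (0:ℝ) v, ‖(1:ℂ)‖ ^ (2:ℝ)) = v := by
      simp [Measure.restrict_apply_univ, Real.volume_Ioo, ENNReal.toReal_ofReal hv.1.le, hv.1.le]
    have e3 : (∫ w in Set.Ioo (0:ℝ) v, ‖G w‖ ^ (2:ℝ)) ≤ Nr :=
      setIntegral_le_integral hGsq
        (Eventually.of_forall fun y => Real.rpow_nonneg (norm_nonneg _) _)
    rw [e1, e2] at h
    refine h.trans ?_
    have h4 : (∫ w in Set.Ioo (0:ℝ) v, ‖G w‖ ^ (2:ℝ)) ^ ((1:ℝ)/2) ≤ Nr ^ ((1:ℝ)/2) :=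
      Real.rpow_le_rpow (integral_nonneg fun y => Real.rpow_nonneg (norm_nonneg _) _) e3
        (by norm_num)
    exact mul_le_mul_of_nonneg_left h4 (Real.rpow_nonneg hv.1.le _)
  -- slice integrability of the kernel-weighted integrand
  have hslice : ∀ c : ℝ, c ≠ 0 → Integrable
      (fun v : ℝ => K v * G (c*v)) (volume.restrict (Set.Ioo (0:ℝ) 1)) := by
    intro c hc
    have h2 : MemLp (fun v => G (c*v)) 2 (volume.restrict (Set.Ioo (0:ℝ) 1)) :=
      (memLp_comp_mul_left hG hc).restrict _
    have h3 := h2.smul (r := 1) hker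
    rw [← memLp_one_iff_integrable]
    exact h3
  have hI2int : Integrable (fun w : ℝ => K w * G w) (volume.restrict (Set.Ioo (0:ℝ) 1)) := by
    have h3 := hGI.smul (r := 1) hker
    rw [← memLp_one_iff_integrable]
    exact h3
  have hI1int : Integrable G (volume.restrict (Set.Ioo (0:ℝ) 1)) := hGI.integrable one_le_two
  -- Cauchy-Schwarz bound for the kernel-weighted integral
  have hCS2 : ∀ c : ℝ, c ≠ 0 →
      (∫ v in Set.Ioo (0:ℝ) 1, ‖K v * G (c*v)‖) ≤
        ((∫ v in Set.Ioo (0:ℝ) 1, ‖K v‖^(2:ℝ)) ^ ((1:ℝ)/2) * Nr ^ ((1:ℝ)/2))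
          * |c⁻¹| ^ ((1:ℝ)/2) := by
    intro c hc
    have hGc0 : MemLp (fun v : ℝ => G (c*v)) 2 volume := memLp_comp_mul_left hG hc
    have hGc : MemLp (fun v : ℝ => G (c*v)) (ENNReal.ofReal 2)
        (volume.restrict (Set.Ioo (0:ℝ) 1)) := by
      rw [hofReal2]; exact hGc0.restrict _
    have hkerE : MemLp K (ENNReal.ofReal 2) (volume.restrict (Set.Ioo (0:ℝ) 1)) := by
      rw [hofReal2]; exact hker
    have h := integral_mul_norm_le_Lp_mul_Lq h22 hkerE hGc
    have hsq : Integrable (fun v : ℝ => ‖G (c*v)‖^(2:ℝ)) volume := by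
      have h2 := (memLp_two_iff_integrable_sq_norm hGc0.aestronglyMeasurable).1 hGc0
      refine h2.congr (Eventually.of_forall fun y => ?_)
      show ‖G (c*y)‖ ^ (2:ℕ) = ‖G (c*y)‖ ^ (2:ℝ)
      rw [← Real.rpow_natCast (‖G (c*y)‖) 2]; norm_num
    have hle : (∫ v in Set.Ioo (0:ℝ) 1, ‖G (c*v)‖^(2:ℝ)) ≤ |c⁻¹| * Nr := by
      have h1 : (∫ v in Set.Ioo (0:ℝ) 1, ‖G (c*v)‖^(2:ℝ)) ≤ ∫ v : ℝ, ‖G (c*v)‖^(2:ℝ) :=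
        setIntegral_le_integral hsq
          (Eventually.of_forall fun y => Real.rpow_nonneg (norm_nonneg _) _)
      have h2 := MeasureTheory.Measure.integral_comp_mul_left (fun y : ℝ => ‖G y‖^(2:ℝ)) c
      rw [smul_eq_mul, ← hNrdef] at h2
      linarith
    have e0 : (∫ v in Set.Ioo (0:ℝ) 1, ‖K v * G (c*v)‖)
        = ∫ v in Set.Ioo (0:ℝ) 1, ‖K v‖ * ‖G (c*v)‖ := by
      refine integral_congr_ae (Eventually.of_forall fun v => ?_)
      simp [norm_mul]
    rw [e0]
    refine h.trans ?_
    have h4 : (∫ v in Set.Ioo (0:ℝ) 1, ‖G (c*v)‖ ^ (2:ℝ)) ^ ((1:ℝ)/2)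
        ≤ (|c⁻¹| * Nr) ^ ((1:ℝ)/2) :=
      Real.rpow_le_rpow (integral_nonneg fun y => Real.rpow_nonneg (norm_nonneg _) _) hle
        (by norm_num)
    have h5 := mul_le_mul_of_nonneg_left
      (a := (∫ v in Set.Ioo (0:ℝ) 1, ‖K v‖^(2:ℝ)) ^ ((1:ℝ)/2)) h4
      (Real.rpow_nonneg (integral_nonneg fun v => Real.rpow_nonneg (norm_nonneg _) _)
        ((1:ℝ)/2))
    refine h5.trans (le_of_eq ?_)
    rw [Real.mul_rpow (abs_nonneg _) hNr0]
    ring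
  -- product integrability of the main double integrand
  have hφm : AEStronglyMeasurable (fun p : ℝ × ℝ => K p.2 * G (p.1*p.2))
      ((volume.restrict (Set.Ioo (0:ℝ) 1)).prod (volume.restrict (Set.Ioo (0:ℝ) 1))) :=
    ((hkm.comp measurable_snd).mul
      (hGm.comp (measurable_fst.mul measurable_snd))).aestronglyMeasurable
  have hIntφ : Integrable (fun p : ℝ × ℝ => K p.2 * G (p.1*p.2))
      ((volume.restrict (Set.Ioo (0:ℝ) 1)).prod (volume.restrict (Set.Ioo (0:ℝ) 1))) := by
    refine (integrable_prod_iff hφm).2 ⟨?_, ?_⟩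
    · filter_upwards [ae_restrict_mem measurableSet_Ioo] with u hu
      exact hslice u (ne_of_gt hu.1)
    · have hB0 : 0 ≤ (∫ v in Set.Ioo (0:ℝ) 1, ‖K v‖^(2:ℝ)) ^ ((1:ℝ)/2) * Nr ^ ((1:ℝ)/2) :=
        mul_nonneg
          (Real.rpow_nonneg (integral_nonneg fun v => Real.rpow_nonneg (norm_nonneg _) _) _)
          (Real.rpow_nonneg hNr0 _)
      refine Integrable.mono'
        (g := fun u : ℝ => ((∫ v in Set.Ioo (0:ℝ) 1, ‖K v‖^(2:ℝ)) ^ ((1:ℝ)/2)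
          * Nr ^ ((1:ℝ)/2)) * u ^ (-(1/2) : ℝ)) ?_ ?_ ?_
      · exact ((intervalIntegral.integrableOn_Ioo_rpow_iff one_pos).2
          (by norm_num)).const_mul _
      · exact hφm.norm.integral_prod_right'
      · filter_upwards [ae_restrict_mem measurableSet_Ioo] with u hu
        rw [Real.norm_eq_abs, _root_.abs_of_nonneg (integral_nonneg fun v => norm_nonneg _)]
        have h1 := hCS2 u (ne_of_gt hu.1)
        have h2 : |u⁻¹| ^ ((1:ℝ)/2) = u ^ (-(1/2) : ℝ) := by
          rw [_root_.abs_of_pos (inv_pos.2 hu.1), ← Real.rpow_neg_one u, ← Real.rpow_mul hu.1.le]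
          norm_num
        rw [h2] at h1
        exact h1.trans (le_of_eq (by ring))
  have hfirst : (∫ u in Set.Ioo (0:ℝ) 1, ∫ v in Set.Ioo (0:ℝ) 1, K v * G (u*v))
      = ∫ v in Set.Ioo (0:ℝ) 1, (K v * ∫ u in Set.Ioo (0:ℝ) 1, G (u*v)) := by
    have hs := integral_integral_swap (f := fun u v : ℝ => K v * G (u*v))
      (μ := volume.restrict (Set.Ioo (0:ℝ) 1)) (ν := volume.restrict (Set.Ioo (0:ℝ) 1))
      hIntφ
    rw [hs]
    exact integral_congr_ae (Eventually.of_forall fun v => integral_const_mul _ _)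
  -- scaling of the inner integral
  have hscale : ∀ v : ℝ, v ∈ Set.Ioo (0:ℝ) 1 →
      (∫ u in Set.Ioo (0:ℝ) 1, G (u*v)) = (v:ℝ)⁻¹ • ∫ w in Set.Ioo (0:ℝ) v, G w := by
    intro v hv
    have hv0 : v ≠ 0 := ne_of_gt hv.1
    have e1 : (∫ u in Set.Ioo (0:ℝ) 1, G (u*v)) = ∫ u in (0:ℝ)..1, G (u*v) := by
      rw [intervalIntegral.integral_of_le zero_le_one, integral_Ioc_eq_integral_Ioo]
    rw [e1, intervalIntegral.integral_comp_mul_right G hv0, zero_mul, one_mul,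
      intervalIntegral.integral_of_le hv.1.le, integral_Ioc_eq_integral_Ioo]
  have hsecond : (∫ v in Set.Ioo (0:ℝ) 1, (K v * ∫ u in Set.Ioo (0:ℝ) 1, G (u*v)))
      = ∫ v in Set.Ioo (0:ℝ) 1, ∫ w in Set.Ioo (0:ℝ) 1,
          (if w < v then (v:ℂ)^(-α-1) * G w else 0) := by
    refine setIntegral_congr_fun measurableSet_Ioo fun v hv => ?_
    have hv0c : ((v:ℝ):ℂ) ≠ 0 := Complex.ofReal_ne_zero.2 (ne_of_gt hv.1)
    rw [hscale v hv]
    have e2 : K v * ((v:ℝ)⁻¹ • ∫ w in Set.Ioo (0:ℝ) v, G w)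
        = (v:ℂ)^(-α-1) * ∫ w in Set.Ioo (0:ℝ) v, G w := by
      rw [Complex.real_smul, Complex.ofReal_inv, hK]
      rw [show (-α-1 : ℂ) = -α + (-1) by ring, Complex.cpow_add _ _ hv0c,
        Complex.cpow_neg_one]
      ring
    rw [e2]
    have e3 : (∫ w in Set.Ioo (0:ℝ) 1, (if w < v then (v:ℂ)^(-α-1) * G w else 0))
        = ∫ w in Set.Ioo (0:ℝ) 1 ∩ Set.Iio v, (v:ℂ)^(-α-1) * G w := by
      rw [← setIntegral_indicator measurableSet_Iio]
      refine setIntegral_congr_fun measurableSet_Ioo fun w _ => ?_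
      by_cases h : w < v <;> simp [Set.indicator_apply, Set.mem_Iio, h]
    rw [e3, Set.Ioo_inter_Iio, min_eq_right hv.2.le, integral_const_mul]
  -- integrability of the triangular integrand
  have hψm : AEStronglyMeasurable
      (fun p : ℝ × ℝ => if p.2 < p.1 then (p.1:ℂ)^(-α-1) * G p.2 else 0)
      ((volume.restrict (Set.Ioo (0:ℝ) 1)).prod (volume.restrict (Set.Ioo (0:ℝ) 1))) := by
    have hm : Measurable fun p : ℝ × ℝ => if p.2 < p.1 then (p.1:ℂ)^(-α-1) * G p.2 else 0 := by
      refine Measurable.ite ?_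
        (((measurable_cpow_const (-α-1)).comp measurable_fst).mul (hGm.comp measurable_snd))
        measurable_const
      exact measurableSet_lt measurable_snd measurable_fst
    exact hm.aestronglyMeasurable
  have hIntψ : Integrable
      (fun p : ℝ × ℝ => if p.2 < p.1 then (p.1:ℂ)^(-α-1) * G p.2 else 0)
      ((volume.restrict (Set.Ioo (0:ℝ) 1)).prod (volume.restrict (Set.Ioo (0:ℝ) 1))) := by
    refine (integrable_prod_iff hψm).2 ⟨?_, ?_⟩
    · filter_upwards [ae_restrict_mem measurableSet_Ioo] with v hv
      have h0 : Integrable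
          (fun w => Set.indicator (Set.Iio v) (fun w : ℝ => (v:ℂ)^(-α-1) * G w) w)
          (volume.restrict (Set.Ioo (0:ℝ) 1)) :=
        (hI1int.const_mul _).indicator measurableSet_Iio
      refine h0.congr (Eventually.of_forall fun w => ?_)
      by_cases h : w < v <;> simp [Set.indicator_apply, Set.mem_Iio, h]
    · refine Integrable.mono'
        (g := fun v : ℝ => Nr ^ ((1:ℝ)/2) * v ^ (-α.re - 1/2 : ℝ)) ?_ ?_ ?_
      · exact ((intervalIntegral.integrableOn_Ioo_rpow_iff one_pos).2
          (by linarith)).const_mul _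
      · exact hψm.norm.integral_prod_right'
      · filter_upwards [ae_restrict_mem measurableSet_Ioo] with v hv
        rw [Real.norm_eq_abs, _root_.abs_of_nonneg (integral_nonneg fun w => norm_nonneg _)]
        have e4 : (∫ w in Set.Ioo (0:ℝ) 1, ‖if w < v then (v:ℂ)^(-α-1) * G w else 0‖)
            = ‖(v:ℂ)^(-α-1)‖ * ∫ w in Set.Ioo (0:ℝ) v, ‖G w‖ := by
          have e4a : ∀ w : ℝ, ‖if w < v then (v:ℂ)^(-α-1) * G w else 0‖
              = Set.indicator (Set.Iio v) (fun w : ℝ => ‖(v:ℂ)^(-α-1)‖ * ‖G w‖) w := by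
            intro w
            by_cases h : w < v <;> simp [Set.indicator_apply, Set.mem_Iio, h, norm_mul]
          rw [integral_congr_ae (Eventually.of_forall e4a),
            setIntegral_indicator measurableSet_Iio, Set.Ioo_inter_Iio,
            min_eq_right hv.2.le, integral_const_mul]
        rw [e4]
        have e5 : ‖(v:ℂ)^(-α-1)‖ = v ^ (-α.re - 1 : ℝ) := by
          rw [Complex.norm_cpow_eq_rpow_re_of_pos hv.1]
          norm_num
        rw [e5]
        calc v ^ (-α.re - 1:ℝ) * ∫ w in Set.Ioo (0:ℝ) v, ‖G w‖
            ≤ v ^ (-α.re - 1:ℝ) * (v ^ ((1:ℝ)/2) * Nr ^ ((1:ℝ)/2)) :=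
              mul_le_mul_of_nonneg_left (hCS1 v hv) (Real.rpow_nonneg hv.1.le _)
          _ = Nr ^ ((1:ℝ)/2) * v ^ (-α.re - 1/2 : ℝ) := by
              rw [show v ^ (-α.re - 1:ℝ) * (v ^ ((1:ℝ)/2) * Nr ^ ((1:ℝ)/2))
                  = (v ^ (-α.re-1:ℝ) * v ^ ((1:ℝ)/2)) * Nr ^ ((1:ℝ)/2) by ring,
                ← Real.rpow_add hv.1, show (-α.re - 1 + 1/2 : ℝ) = -α.re - 1/2 by ring]
              ring
  have hswap2 : (∫ v in Set.Ioo (0:ℝ) 1, ∫ w in Set.Ioo (0:ℝ) 1,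
        (if w < v then (v:ℂ)^(-α-1) * G w else 0))
      = ∫ w in Set.Ioo (0:ℝ) 1, ∫ v in Set.Ioo (0:ℝ) 1,
        (if w < v then (v:ℂ)^(-α-1) * G w else 0) :=
    integral_integral_swap (f := fun v w : ℝ => if w < v then (v:ℂ)^(-α-1) * G w else 0)
      hIntψ
  have hinner : ∀ w : ℝ, w ∈ Set.Ioo (0:ℝ) 1 →
      (∫ v in Set.Ioo (0:ℝ) 1, (if w < v then (v:ℂ)^(-α-1) * G w else 0))
        = (α⁻¹ * ((w:ℂ)^(-α) - 1)) * G w := by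
    intro w hw
    have e6 : (∫ v in Set.Ioo (0:ℝ) 1, (if w < v then (v:ℂ)^(-α-1) * G w else 0))
        = ∫ v in Set.Ioo w 1, (v:ℂ)^(-α-1) * G w := by
      have e6a : ∀ v : ℝ, (if w < v then (v:ℂ)^(-α-1) * G w else 0)
          = Set.indicator (Set.Ioi w) (fun v : ℝ => (v:ℂ)^(-α-1) * G w) v := by
        intro v; by_cases h : w < v <;> simp [Set.indicator_apply, Set.mem_Ioi, h]
      rw [integral_congr_ae (Eventually.of_forall e6a),
        setIntegral_indicator measurableSet_Ioi, Set.Ioo_inter_Ioi, max_eq_right hw.1.le]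
    rw [e6, integral_mul_const]
    have e7 : (∫ v in Set.Ioo w 1, (v:ℂ)^(-α-1)) = α⁻¹ * ((w:ℂ)^(-α) - 1) := by
      rw [← integral_Ioc_eq_integral_Ioo, ← intervalIntegral.integral_of_le hw.2.le]
      have hne : (-α - 1 : ℂ) ≠ -1 := by
        intro h
        apply hα0
        have h2 : -α = 0 := by linear_combination h
        simpa [neg_eq_zero] using h2
      have h0 : (0:ℝ) ∉ Set.uIcc w 1 := by
        rw [Set.uIcc_of_le hw.2.le]
        simp only [Set.mem_Icc, not_and]
        exact fun h => absurd h (not_le.2 hw.1)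
      rw [integral_cpow (Or.inr ⟨hne, h0⟩)]
      rw [show (-α - 1 + 1 : ℂ) = -α by ring, Complex.ofReal_one, Complex.one_cpow]
      rw [div_neg, eq_comm, ← neg_eq_iff_eq_neg]
      field_simp
      ring
    rw [e7]
  have hthird : (∫ w in Set.Ioo (0:ℝ) 1, ∫ v in Set.Ioo (0:ℝ) 1,
        (if w < v then (v:ℂ)^(-α-1) * G w else 0))
      = ∫ w in Set.Ioo (0:ℝ) 1, (α⁻¹ * ((w:ℂ)^(-α) - 1)) * G w :=
    setIntegral_congr_fun measurableSet_Ioo fun w hw => hinner w hw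
  have hS4 : (∫ w in Set.Ioo (0:ℝ) 1, (α⁻¹ * ((w:ℂ)^(-α) - 1)) * G w)
      = α⁻¹ * ((∫ w in Set.Ioo (0:ℝ) 1, K w * G w) - ∫ w in Set.Ioo (0:ℝ) 1, G w) := by
    have e8 : ∀ w : ℝ, (α⁻¹ * ((w:ℂ)^(-α) - 1)) * G w = α⁻¹ * (K w * G w - G w) := by
      intro w; rw [hK]; ring
    rw [integral_congr_ae (Eventually.of_forall e8), integral_const_mul,
      integral_sub hI2int hI1int]
  have h2final : (∫ v in Set.Ioo (0:ℝ) 1, (K v * ∫ u in Set.Ioo (0:ℝ) 1, G (u*v)))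
      = α⁻¹ * ((∫ w in Set.Ioo (0:ℝ) 1, K w * G w) - ∫ w in Set.Ioo (0:ℝ) 1, G w) :=
    hsecond.trans (hswap2.trans (hthird.trans hS4))
  exact ⟨hfirst.trans h2final, h2final⟩


lemma formula_C {C : L2 →L[ℂ] L2} (hC : IsCesaroOp C) (f : L2) {F : ℝ → ℂ}
    (hFae : ⇑f =ᵐ[volume] F) :
    ∀ᵐ x : ℝ ∂volume, C f x = ∫ u in Set.Ioo (0:ℝ) 1, F (u * x) := by
  have hs : volume {t : ℝ | ¬ (⇑f t = F t)} = 0 := ae_iff.mp hFae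
  filter_upwards [hC f, ae_ae_mul_notMem hs] with x h1 h2
  rw [h1]
  refine integral_congr_ae (ae_restrict_of_ae ?_)
  filter_upwards [h2] with u hu
  exact not_not.mp hu

lemma formula_P {P : L2 →L[ℂ] L2} {α : ℂ} (hP : IsHausdorffOp (hardyKernel α) P)
    (f : L2) {F : ℝ → ℂ} (hFae : ⇑f =ᵐ[volume] F) :
    ∀ᵐ x : ℝ ∂volume, P f x = ∫ u in Set.Ioo (0:ℝ) 1, (u:ℂ)^(-α) * F (u * x) := by
  have hs : volume {t : ℝ | ¬ (⇑f t = F t)} = 0 := ae_iff.mp hFae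
  filter_upwards [hP f, ae_ae_mul_notMem hs] with x h1 h2
  rw [h1]
  have e1 : (∫ u : ℝ, hardyKernel α u * ⇑f (u*x)) = ∫ u : ℝ, hardyKernel α u * F (u*x) := by
    refine integral_congr_ae ?_
    filter_upwards [h2] with u hu
    rw [not_not.mp hu]
  rw [e1]
  have e2 : ∀ u : ℝ, hardyKernel α u * F (u*x)
      = Set.indicator (Set.Ioo (0:ℝ) 1) (fun u : ℝ => (u:ℂ)^(-α) * F (u*x)) u := by
    intro u
    unfold hardyKernel
    by_cases h : u ∈ Set.Ioo (0:ℝ) 1 <;> simp [Set.indicator_apply, h]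
  rw [integral_congr_ae (Eventually.of_forall e2), integral_indicator measurableSet_Ioo]

lemma key (C P : L2 →L[ℂ] L2) (hC : IsCesaroOp C) (α : ℂ) (hα : α.re < 1/2) (hα0 : α ≠ 0)
    (hP : IsHausdorffOp (hardyKernel α) P) :
    (1 - α • C) * (1 + α • P) = 1 ∧ (1 + α • P) * (1 - α • C) = 1 := by
  have main : ∀ f : L2, P f - C f = α • (C (P f)) ∧ P f - C f = α • (P (C f)) := by
    intro f
    have hfm := Lp.aestronglyMeasurable f
    set F : ℝ → ℂ := hfm.mk ⇑f with hFdef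
    have hFsm : StronglyMeasurable F := hfm.stronglyMeasurable_mk
    have hFae : ⇑f =ᵐ[volume] F := hfm.ae_eq_mk
    have hF2 : MemLp F 2 volume := (Lp.memLp f).ae_eq hFae
    have hE1 := formula_C hC f hFae
    have hE2 := formula_P hP f hFae
    have hE1' : ⇑(C f) =ᵐ[volume] fun y => ∫ u in Set.Ioo (0:ℝ) 1, F (u * y) := hE1
    have hE2' : ⇑(P f) =ᵐ[volume] fun y => ∫ u in Set.Ioo (0:ℝ) 1, (u:ℂ)^(-α) * F (u * y) := hE2
    have hE3 := formula_C hC (P f) hE2'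
    have hE4 := formula_P hP (C f) hE1'
    have hne : ∀ᵐ x : ℝ ∂volume, x ≠ 0 := by
      rw [ae_iff]; simpa using Real.volume_singleton
    have hmain : ∀ᵐ x : ℝ ∂volume,
        (P f x - C f x = α * (C (P f) x)) ∧ (P f x - C f x = α * (P (C f) x)) := by
      filter_upwards [hE1, hE2, hE3, hE4, hne] with x h1 h2 h3 h4 hx0
      have hGm : Measurable (fun w : ℝ => F (w * x)) :=
        hFsm.measurable.comp (measurable_mul_const x)
      have hG2 : MemLp (fun w : ℝ => F (w * x)) 2 volume := memLp_comp_mul_right hF2 hx0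
      have hcore := core hα hα0 hGm hG2
      have e3 : (∫ u in Set.Ioo (0:ℝ) 1, ∫ v in Set.Ioo (0:ℝ) 1, (v:ℂ)^(-α) * F (v * (u*x)))
          = ∫ u in Set.Ioo (0:ℝ) 1, ∫ v in Set.Ioo (0:ℝ) 1, (v:ℂ)^(-α) * F ((u*v) * x) := by
        refine integral_congr_ae (Eventually.of_forall fun u => ?_)
        refine integral_congr_ae (Eventually.of_forall fun v => ?_)
        simp only
        rw [show v * (u * x) = u * v * x from by ring]
      have e4 : (∫ v in Set.Ioo (0:ℝ) 1, (v:ℂ)^(-α) * ∫ u in Set.Ioo (0:ℝ) 1, F (u * (v*x)))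
          = ∫ v in Set.Ioo (0:ℝ) 1, (v:ℂ)^(-α) * ∫ u in Set.Ioo (0:ℝ) 1, F ((u*v) * x) := by
        refine integral_congr_ae (Eventually.of_forall fun v => ?_)
        simp only
        congr 1
        refine integral_congr_ae (Eventually.of_forall fun u => ?_)
        simp only
        rw [show u * (v * x) = u * v * x from by ring]
      have h3' : C (P f) x = α⁻¹ * ((∫ w in Set.Ioo (0:ℝ) 1, (w:ℂ)^(-α) * F (w*x))
          - ∫ w in Set.Ioo (0:ℝ) 1, F (w*x)) := by
        rw [h3]
        exact e3.trans hcore.1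
      have h4' : P (C f) x = α⁻¹ * ((∫ w in Set.Ioo (0:ℝ) 1, (w:ℂ)^(-α) * F (w*x))
          - ∫ w in Set.Ioo (0:ℝ) 1, F (w*x)) := by
        rw [h4]
        exact e4.trans hcore.2
      constructor
      · rw [h1, h2, h3', ← mul_assoc, mul_inv_cancel₀ hα0, one_mul]
      · rw [h1, h2, h4', ← mul_assoc, mul_inv_cancel₀ hα0, one_mul]
    constructor
    · apply Lp.ext
      filter_upwards [hmain, Lp.coeFn_sub (P f) (C f), Lp.coeFn_smul α (C (P f))]
        with x hx hsub hsmul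
      rw [hsub, hsmul, Pi.sub_apply, Pi.smul_apply, smul_eq_mul]
      exact hx.1
    · apply Lp.ext
      filter_upwards [hmain, Lp.coeFn_sub (P f) (C f), Lp.coeFn_smul α (P (C f))]
        with x hx hsub hsmul
      rw [hsub, hsmul, Pi.sub_apply, Pi.smul_apply, smul_eq_mul]
      exact hx.2
  have hop1 : P - C = α • (C * P) := by
    refine ContinuousLinearMap.ext fun f => ?_
    have h := (main f).1
    simpa [ContinuousLinearMap.sub_apply, ContinuousLinearMap.smul_apply,
      ContinuousLinearMap.mul_apply] using h
  have hop2 : P - C = α • (P * C) := by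
    refine ContinuousLinearMap.ext fun f => ?_
    have h := (main f).2
    simpa [ContinuousLinearMap.sub_apply, ContinuousLinearMap.smul_apply,
      ContinuousLinearMap.mul_apply] using h
  constructor
  · calc (1 - α • C) * (1 + α • P)
        = (1 + α • P) - α • (C * (1 + α • P)) := by
          rw [sub_mul, one_mul, smul_mul_assoc]
      _ = 1 + α • P - (α • C + α • (α • (C * P))) := by
          rw [mul_add, mul_one, mul_smul_comm, smul_add]
      _ = 1 + α • P - (α • C + α • (P - C)) := by rw [← hop1]
      _ = 1 := by rw [smul_sub]; abel
  · calc (1 + α • P) * (1 - α • C)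
        = (1 - α • C) + α • (P * (1 - α • C)) := by
          rw [add_mul, one_mul, smul_mul_assoc]
      _ = 1 - α • C + (α • P - α • (α • (P * C))) := by
          rw [mul_sub, mul_one, mul_smul_comm, smul_sub]
      _ = 1 - α • C + (α • P - α • (P - C)) := by rw [← hop2]
      _ = 1 := by rw [smul_sub]; abel

/-- For `|λ - 1| > 1`, the resolvent of the Cesàro operator `C` on
`L²(ℝ)` is `(λI - C)⁻¹ = λ⁻² 𝒫_{1/λ} + λ⁻¹ I`, where `𝒫_α` is the Hardy operator
(the Hausdorff operator with kernel `u^{-α} χ_{(0,1)}`); equivalently, for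
`Re α < 1/2`, `α ≠ 0`, one has `𝒫_α = α⁻¹((I - αC)⁻¹ - I)`,
i.e. `I + α 𝒫_α = (I - αC)⁻¹`. -/
theorem stmt3
    (C : L2 →L[ℂ] L2) (hC : IsCesaroOp C)
    (hσ : spectrum ℂ C = Metric.sphere (1:ℂ) 1) :
    (∀ lam : ℂ, 1 < ‖lam - 1‖ →
      ∀ P : L2 →L[ℂ] L2, IsHausdorffOp (hardyKernel lam⁻¹) P →
        (algebraMap ℂ (L2 →L[ℂ] L2) lam - C) * (lam⁻¹ ^ 2 • P + lam⁻¹ • 1) = 1 ∧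
        (lam⁻¹ ^ 2 • P + lam⁻¹ • 1) * (algebraMap ℂ (L2 →L[ℂ] L2) lam - C) = 1) ∧
    (∀ α : ℂ, α.re < 1/2 → α ≠ 0 →
      ∀ P : L2 →L[ℂ] L2, IsHausdorffOp (hardyKernel α) P →
        (1 - α • C) * (1 + α • P) = 1 ∧ (1 + α • P) * (1 - α • C) = 1) := by
  constructor
  · intro lam hlam P hP
    have hlam0 : lam ≠ 0 := by
      rintro rfl
      norm_num at hlam
    have hre : (lam⁻¹).re < 1/2 := by
      have h1 : (1:ℝ) < Complex.normSq (lam - 1) := by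
        have := hlam
        rw [← Complex.sq_norm]
        nlinarith [norm_nonneg (lam - 1)]
      have hn : 0 < Complex.normSq lam := Complex.normSq_pos.2 hlam0
      rw [Complex.inv_re, div_lt_iff₀ hn]
      have h2 : Complex.normSq (lam - 1) = Complex.normSq lam - 2 * lam.re + 1 := by
        simp [Complex.normSq_apply, Complex.sub_re, Complex.sub_im]
        ring
      nlinarith
    have hinv0 : lam⁻¹ ≠ 0 := inv_ne_zero hlam0
    obtain ⟨h1, h2⟩ := key C P hC lam⁻¹ hre hinv0 hP
    have e1 : algebraMap ℂ (L2 →L[ℂ] L2) lam - C = lam • ((1:L2 →L[ℂ] L2) - lam⁻¹ • C) := by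
      rw [smul_sub, Algebra.algebraMap_eq_smul_one, smul_smul, mul_inv_cancel₀ hlam0, one_smul]
    have e2 : lam⁻¹ ^ 2 • P + lam⁻¹ • (1:L2 →L[ℂ] L2) = lam⁻¹ • (1 + lam⁻¹ • P) := by
      rw [smul_add, smul_smul, sq, add_comm]
    rw [e1, e2, smul_mul_assoc, mul_smul_comm, smul_smul, mul_inv_cancel₀ hlam0, one_smul, h1]
    refine ⟨rfl, ?_⟩
    rw [smul_mul_assoc, mul_smul_comm, smul_smul, inv_mul_cancel₀ hlam0, one_smul, h2]
  · intro α hα hα0 P hP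
    exact key C P hC α hα hα0 hP
end
end

section
/- Let F be a function holomorphic in a neighborhood of the circle 𝕋+1 = {z ∈ ℂ : |z−1| = 1}, with F(0) = 0 if 0 lies in that neighborhood. Then F(𝒞₊) = F(𝒞)₊, i.e., the holomorphic functional calculus of the Cesàro operator 𝒞₊ on L²(ℝ₊) equals the restriction to L²(ℝ₊) of the holomorphic functional calculus of the Cesàro operator 𝒞 on L²(ℝ). -/
open MeasureTheory Complex Filter

noncomputable section

/-- If `w` vanishes a.e. on the positive half line, then so does `C w`. -/
lemma cesaro_vanish (C : L2 →L[ℂ] L2) (hC : IsCesaroOp C) (w : L2)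
    (hw : ∀ᵐ x : ℝ ∂volume, 0 < x → w x = 0) :
    ∀ᵐ x : ℝ ∂volume, 0 < x → C w x = 0 := by
  set φ : ℝ → ℂ := (w : ℝ → ℂ) with hφ
  have hφm : Measurable φ := (Lp.stronglyMeasurable w).measurable
  set A : Set ℝ := {y | 0 < y → φ y = 0} with hA
  have hAm : MeasurableSet A := by
    have : A = (Set.Ioi (0:ℝ) ∩ φ ⁻¹' ({0}ᶜ))ᶜ := by
      ext y; simp only [hA, Set.mem_setOf_eq, Set.mem_compl_iff, Set.mem_inter_iff,
        Set.mem_Ioi, Set.mem_preimage, Set.mem_compl_iff, Set.mem_singleton_iff]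
      tauto
    rw [this]
    exact (measurableSet_Ioi.inter (hφm (measurableSet_singleton (0:ℂ)).compl)).compl
  have hAc : volume Aᶜ = 0 := by
    rw [ae_iff] at hw
    convert hw using 2
    rfl
  have h1 : ∀ᵐ u : ℝ ∂volume, ∀ᵐ x : ℝ ∂volume, u * x ∈ A := by
    have hu0 : ∀ᵐ u : ℝ ∂volume, u ≠ 0 := by
      rw [ae_iff]
      simpa using measure_singleton (0:ℝ)
    filter_upwards [hu0] with u hu
    rw [ae_iff]
    have : {x : ℝ | ¬ u * x ∈ A} = (fun x => u * x) ⁻¹' Aᶜ := rfl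
    rw [this, Real.volume_preimage_mul_left hu, hAc, mul_zero]
  have hmeas : MeasurableSet {z : ℝ × ℝ | z.1 * z.2 ∈ A} :=
    (measurable_fst.mul measurable_snd) hAm
  have h2 : ∀ᵐ x : ℝ ∂volume, ∀ᵐ u : ℝ ∂volume, u * x ∈ A :=
    (Measure.ae_ae_comm hmeas).mp h1
  filter_upwards [h2, hC w] with x hx hCx hxpos
  rw [hCx]
  have hz : ∀ᵐ u ∂(volume.restrict (Set.Ioo (0:ℝ) 1)), φ (u * x) = 0 := by
    filter_upwards [ae_restrict_of_ae hx, ae_restrict_mem measurableSet_Ioo] with u h1' h2'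
    exact h1' (mul_pos h2'.1 hxpos)
  exact (integral_congr_ae hz).trans (integral_zero _ _)

/-- Inner product of two `L²` functions whose supports are a.e. disjoint vanishes. -/
lemma inner_eq_zero_of_ae (u v : L2) (h : ∀ᵐ x : ℝ ∂volume, u x = 0 ∨ v x = 0) :
    (inner ℂ u v) = 0 := by
  rw [MeasureTheory.L2.inner_def]
  have : (fun x => (inner ℂ (u x) (v x))) =ᵐ[volume] 0 := by
    filter_upwards [h] with x hx
    rcases hx with hx | hx <;> simp [hx]
  exact (integral_congr_ae this).trans (integral_zero _ _)

/-- The adjoint of the Cesàro operator also intertwines with `J`. -/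
lemma adj_intertwine
    (C : L2 →L[ℂ] L2) (hC : IsCesaroOp C)
    (Hp : Type) [NormedAddCommGroup Hp] [InnerProductSpace ℂ Hp] [CompleteSpace Hp]
    (J : Hp →ₗᵢ[ℂ] L2)
    (hJ : ∀ f : L2, (∃ g : Hp, J g = f) ↔
      ∀ᵐ x : ℝ ∂MeasureTheory.volume, x < 0 → f x = 0)
    (Cp : Hp →L[ℂ] Hp) (hCp : ∀ g : Hp, J (Cp g) = C (J g)) :
    ∀ g : Hp, J (ContinuousLinearMap.adjoint Cp g) = ContinuousLinearMap.adjoint C (J g) := by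
  intro g
  set h : L2 := ContinuousLinearMap.adjoint C (J g) with hh
  set ind : ℝ → ℂ := (Set.Iio (0:ℝ)).indicator (h : ℝ → ℂ) with hind_def
  have hind : MemLp ind 2 volume := (Lp.memLp h).indicator measurableSet_Iio
  set fm : L2 := hind.toLp ind with hfm_def
  have hfm : (fm : ℝ → ℂ) =ᵐ[volume] ind := MemLp.coeFn_toLp hind
  have hne : ∀ᵐ x : ℝ ∂volume, x ≠ 0 := by
    rw [ae_iff]; simpa using measure_singleton (0:ℝ)
  have hfmpos : ∀ᵐ x : ℝ ∂volume, 0 < x → fm x = 0 := by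
    filter_upwards [hfm] with x hx hpos
    rw [hx, hind_def]
    exact Set.indicator_of_notMem (by simp; linarith) _
  have hCfm : ∀ᵐ x : ℝ ∂volume, 0 < x → C fm x = 0 := cesaro_vanish C hC fm hfmpos
  have hJg : ∀ᵐ x : ℝ ∂volume, x < 0 → (J g : L2) x = 0 := (hJ (J g)).mp ⟨g, rfl⟩
  have h1 : (inner ℂ (J g : L2) (C fm)) = 0 := by
    apply inner_eq_zero_of_ae
    filter_upwards [hJg, hCfm, hne] with x h1' h2' h3'
    rcases lt_trichotomy x 0 with hx | hx | hx
    · exact Or.inl (h1' hx)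
    · exact absurd hx h3'
    · exact Or.inr (h2' hx)
  have h2 : (inner ℂ (h : L2) fm) = (inner ℂ fm fm) := by
    rw [MeasureTheory.L2.inner_def, MeasureTheory.L2.inner_def]
    apply integral_congr_ae
    filter_upwards [hfm] with x hx
    rw [hx]
    by_cases hmem : x ∈ Set.Iio (0:ℝ)
    · rw [hind_def, Set.indicator_of_mem hmem]
    · rw [hind_def, Set.indicator_of_notMem hmem]
      simp
  have h3 : (inner ℂ (h : L2) fm) = (inner ℂ (J g : L2) (C fm)) :=
    ContinuousLinearMap.adjoint_inner_left C fm (J g)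
  have hfm0 : fm = 0 := by
    rw [← inner_self_eq_zero (𝕜 := ℂ) (x := fm), ← h2, h3, h1]
  have hind0 : ∀ᵐ x : ℝ ∂volume, x < 0 → h x = 0 := by
    have hz : (fm : ℝ → ℂ) =ᵐ[volume] 0 := by
      rw [hfm0]; exact Lp.coeFn_zero ℂ 2 volume
    filter_upwards [hfm, hz] with x hx hzx hneg
    have h4 : (Set.Iio (0:ℝ)).indicator (↑↑h : ℝ → ℂ) x = 0 := by
      have e : (Set.Iio (0:ℝ)).indicator (↑↑h : ℝ → ℂ) x = ind x := rfl
      rw [e, ← hx, hzx]; rfl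
    rwa [Set.indicator_of_mem (Set.mem_Iio.mpr hneg)] at h4
  obtain ⟨g', hg'⟩ := (hJ h).mpr hind0
  have hgadj : g' = ContinuousLinearMap.adjoint Cp g := by
    apply ext_inner_right ℂ
    intro v
    calc (inner ℂ g' v) = (inner ℂ (J g') (J v)) := (J.inner_map_map g' v).symm
      _ = (inner ℂ (h : L2) (J v)) := by rw [hg']
      _ = (inner ℂ (J g : L2) (C (J v))) := ContinuousLinearMap.adjoint_inner_left C (J v) (J g)
      _ = (inner ℂ (J g : L2) (J (Cp v))) := by rw [hCp]
      _ = (inner ℂ g (Cp v)) := J.inner_map_map _ _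
      _ = (inner ℂ (ContinuousLinearMap.adjoint Cp g) v) :=
        (ContinuousLinearMap.adjoint_inner_left Cp v g).symm
  rw [← hgadj, hg']

/-- Let `Hp ≅ L²(ℝ₊)` be the closed subspace of `L²(ℝ)` of
functions vanishing a.e. on `(-∞, 0)` (realized as a Hilbert space `Hp` with a
linear isometry `J` onto that subspace), let `C₊` be the restriction of the Cesàro
operator `C` (i.e. `J ∘ C₊ = C ∘ J`), and let `F` be holomorphic in a neighborhood
`U` of the circle `𝕋+1` (the common spectrum of `C` and `C₊`), with `F 0 = 0`
whenever `0 ∈ U`. Then `F(C₊) = F(C)₊`, i.e. the functional calculus of `C₊`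
(realized for the normal operator `C₊` as `cfc F C₊`) is the restriction to the
subspace of the functional calculus of `C`. -/
theorem stmt16
    (C : L2 →L[ℂ] L2) (hC : IsCesaroOp C) (hN : IsStarNormal C)
    (hσ : spectrum ℂ C = Metric.sphere (1:ℂ) 1)
    (Hp : Type) [NormedAddCommGroup Hp] [InnerProductSpace ℂ Hp] [CompleteSpace Hp]
    (J : Hp →ₗᵢ[ℂ] L2)
    (hJ : ∀ f : L2, (∃ g : Hp, J g = f) ↔
      ∀ᵐ x : ℝ ∂MeasureTheory.volume, x < 0 → f x = 0)
    (Cp : Hp →L[ℂ] Hp) (hCp : ∀ g : Hp, J (Cp g) = C (J g))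
    (hNp : IsStarNormal Cp)
    (hσp : spectrum ℂ Cp = Metric.sphere (1:ℂ) 1)
    (F : ℂ → ℂ) (U : Set ℂ) (hU : IsOpen U)
    (hsub : Metric.sphere (1:ℂ) 1 ⊆ U)
    (hF : DifferentiableOn ℂ F U) (hF0 : (0:ℂ) ∈ U → F 0 = 0) :
    ∀ g : Hp, J ((cfc F Cp) g) = (cfc F C) (J g) := by
  set s : Set ℂ := Metric.sphere (1:ℂ) 1 with hs
  haveI : CompactSpace s := isCompact_iff_compactSpace.mp (isCompact_sphere _ _)
  -- inclusion maps
  have hsubp : spectrum ℂ Cp ⊆ s := hσp.le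
  have hsubC : spectrum ℂ C ⊆ s := hσ.le
  set ιp : C(spectrum ℂ Cp, s) := ⟨Set.inclusion hsubp, continuous_inclusion hsubp⟩ with hιp
  set ιC : C(spectrum ℂ C, s) := ⟨Set.inclusion hsubC, continuous_inclusion hsubC⟩ with hιC
  set φp : C(s, ℂ) →⋆ₐ[ℂ] (Hp →L[ℂ] Hp) :=
    (cfcHom hNp).comp (ContinuousMap.compStarAlgHom' ℂ ℂ ιp) with hφp
  set φC : C(s, ℂ) →⋆ₐ[ℂ] (L2 →L[ℂ] L2) :=
    (cfcHom hN).comp (ContinuousMap.compStarAlgHom' ℂ ℂ ιC) with hφC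
  have hφpc : Continuous φp :=
    (cfcHom_isClosedEmbedding hNp).continuous.comp (ContinuousMap.continuous_precomp ιp)
  have hφCc : Continuous φC :=
    (cfcHom_isClosedEmbedding hN).continuous.comp (ContinuousMap.continuous_precomp ιC)
  -- the key intertwining for all continuous functions on `s`
  have key : ∀ f : C(s, ℂ), ∀ g : Hp, J (φp f g) = φC f (J g) := by
    have hid_p : φp (ContinuousMap.restrict s (ContinuousMap.id ℂ)) = Cp := by
      have : (ContinuousMap.restrict s (ContinuousMap.id ℂ)).comp ιp =
          (ContinuousMap.id ℂ).restrict (spectrum ℂ Cp) := by ext x; rfl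
      rw [hφp, StarAlgHom.comp_apply, ContinuousMap.compStarAlgHom'_apply, this, cfcHom_id hNp]
    have hid_C : φC (ContinuousMap.restrict s (ContinuousMap.id ℂ)) = C := by
      have : (ContinuousMap.restrict s (ContinuousMap.id ℂ)).comp ιC =
          (ContinuousMap.id ℂ).restrict (spectrum ℂ C) := by ext x; rfl
      rw [hφC, StarAlgHom.comp_apply, ContinuousMap.compStarAlgHom'_apply, this, cfcHom_id hN]
    intro f
    induction f using ContinuousMap.induction_on_of_compact with
    | const r =>
      intro g
      have e1 : ContinuousMap.const s r = algebraMap ℂ C(s, ℂ) r := rfl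
      rw [e1, AlgHomClass.commutes, AlgHomClass.commutes]
      simp [Algebra.algebraMap_eq_smul_one, J.map_smul]
    | id =>
      intro g
      rw [hid_p, hid_C]
      exact hCp g
    | star_id =>
      intro g
      rw [map_star, map_star, hid_p, hid_C, ContinuousLinearMap.star_eq_adjoint,
        ContinuousLinearMap.star_eq_adjoint]
      exact adj_intertwine C hC Hp J hJ Cp hCp g
    | add f₁ f₂ h₁ h₂ =>
      intro g
      rw [map_add, map_add]
      simp only [ContinuousLinearMap.add_apply, map_add]
      rw [h₁ g, h₂ g]
    | mul f₁ f₂ h₁ h₂ =>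
      intro g
      rw [map_mul, map_mul]
      simp only [ContinuousLinearMap.mul_apply]
      rw [h₁ (φp f₂ g), h₂ g]
    | frequently f hf =>
      -- the set of functions satisfying the intertwining is closed
      set Jc : Hp →L[ℂ] L2 := J.toContinuousLinearMap with hJc
      have hset : IsClosed {f : C(s, ℂ) |
          Jc.comp (φp f) = (φC f).comp Jc} := by
        apply isClosed_eq
        · exact (ContinuousLinearMap.compSL Hp Hp L2 (RingHom.id ℂ) (RingHom.id ℂ)
            Jc).continuous.comp hφpc
        · exact ((ContinuousLinearMap.compSL Hp L2 L2 (RingHom.id ℂ) (RingHom.id ℂ)).flip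
            Jc).continuous.comp hφCc
      have hmem : f ∈ {f : C(s, ℂ) | Jc.comp (φp f) = (φC f).comp Jc} := by
        rw [← hset.closure_eq]
        apply mem_closure_iff_frequently.mpr
        apply hf.mono
        intro f' hf'
        exact ContinuousLinearMap.ext fun g => hf' g
      intro g
      exact DFunLike.congr_fun hmem g
  -- apply to the restriction of `F`
  have hFcontp : ContinuousOn F (spectrum ℂ Cp) := by
    rw [hσp]; exact (hF.continuousOn).mono hsub
  have hFcontC : ContinuousOn F (spectrum ℂ C) := by
    rw [hσ]; exact (hF.continuousOn).mono hsub
  have hFs : ContinuousOn F s := (hF.continuousOn).mono hsub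
  set fF : C(s, ℂ) := ⟨s.restrict F, hFs.restrict⟩ with hfF
  have e1 : cfc F Cp = φp fF := by
    have hcm : fF.comp ιp = ⟨(spectrum ℂ Cp).restrict F, hFcontp.restrict⟩ := by ext x; rfl
    rw [cfc_apply F Cp hNp hFcontp, hφp, StarAlgHom.comp_apply,
      ContinuousMap.compStarAlgHom'_apply, hcm]
    rfl
  have e2 : cfc F C = φC fF := by
    have hcm : fF.comp ιC = ⟨(spectrum ℂ C).restrict F, hFcontC.restrict⟩ := by ext x; rfl
    rw [cfc_apply F C hN hFcontC, hφC, StarAlgHom.comp_apply,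
      ContinuousMap.compStarAlgHom'_apply, hcm]
    rfl
  intro g
  rw [e1, e2]
  exact key fF g
end
end
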